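/- Let B̄ be the closed Euclidean ball of radius r̃ centered at 0 in ℝⁿ, and let f : B̄ → f(B̄) ⊆ ℝⁿ be a covering map with f(0) = p. Suppose v₀ ≠ v₁ in the open ball B(0, r₅) (with r₅ < r̃) satisfy f(v₀) = f(v₁) = q, the curves γᵢ(t) = f(t vᵢ) (t ∈ [0,1]) lie in a set D ⊆ f(B̄), and the straight-line homotopy γ_s(t) = s γ₁(t) + (1 − s) γ₀(t) has image in D ⊆ f(B̄). Then lifting the homotopy with fixed endpoints yields a contradiction: hence f is injective on B(0, r₅). -/

import Mathlib

open Set Metric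

section Helpers

variable {E X : Type*} [TopologicalSpace E] [TopologicalSpace X] {F : E → X}

/-- Transport a point `e` to the point over `y` in the same sheet of the trivialization `T`. -/
noncomputable def tpt {x : X} (T : Bundle.Trivialization (F ⁻¹' {x}) F) (y : X) (e : E) : E :=
  T.toOpenPartialHomeomorph.symm (y, (T e).2)

lemma F_tpt {x : X} (T : Bundle.Trivialization (F ⁻¹' {x}) F) {y : X} (hy : y ∈ T.baseSet) (e : E) :
    F (tpt T y e) = y :=
  T.proj_symm_apply (T.mem_target.2 hy)

lemma tpt_mem_source {x : X} (T : Bundle.Trivialization (F ⁻¹' {x}) F) {y : X} (hy : y ∈ T.baseSet)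
    (e : E) : tpt T y e ∈ T.source :=
  T.map_target (T.mem_target.2 hy)

lemma T_tpt {x : X} (T : Bundle.Trivialization (F ⁻¹' {x}) F) {y : X} (hy : y ∈ T.baseSet) (e : E) :
    T (tpt T y e) = (y, (T e).2) :=
  T.apply_symm_apply (T.mem_target.2 hy)

lemma tpt_self {x : X} (T : Bundle.Trivialization (F ⁻¹' {x}) F) {e : E} (he : e ∈ T.source) :
    tpt T (F e) e = e :=
  T.symm_apply_mk_proj he

/-- If `e'` lies in the source and has the same sheet as `e`, then `e'` is the transport of `e`
to `F e'`. -/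
lemma eq_tpt {x : X} (T : Bundle.Trivialization (F ⁻¹' {x}) F) {e' e : E} (he' : e' ∈ T.source)
    (h2 : (T e').2 = (T e).2) : e' = tpt T (F e') e := by
  rw [tpt, ← h2, T.symm_apply_mk_proj he']

lemma triv_continuousOn {I : Type*} [TopologicalSpace I] (T : Bundle.Trivialization I F) :
    ContinuousOn T T.source := by
  have := T.toOpenPartialHomeomorph.continuousOn
  rwa [Bundle.Trivialization.coe_coe] at this

lemma continuousOn_tpt_fixed {α : Type*} [TopologicalSpace α] {x : X}
    (T : Bundle.Trivialization (F ⁻¹' {x}) F) (i : F ⁻¹' {x})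
    {c : α → X} {s : Set α} (hc : ContinuousOn c s) (hmem : ∀ a ∈ s, c a ∈ T.baseSet) :
    ContinuousOn (fun a => T.toOpenPartialHomeomorph.symm (c a, i)) s :=
  T.toOpenPartialHomeomorph.continuousOn_symm.comp (hc.prodMk continuousOn_const)
    (fun a ha => T.mem_target.2 (hmem a ha))

/-- Sheet of a connected family lying in the source of a trivialization is constant. -/
lemma sheet_const {x : X} (T : Bundle.Trivialization (F ⁻¹' {x}) F)
    [DiscreteTopology (F ⁻¹' {x} : Set E)] {g : ℝ → E} {a b c d : ℝ}
    (hg : ContinuousOn g (Icc a b)) (hmem : ∀ t ∈ Icc a b, g t ∈ T.source)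
    (hc : c ∈ Icc a b) (hd : d ∈ Icc a b) :
    (T (g c)).2 = (T (g d)).2 := by
  have hcont : ContinuousOn (fun t => (T (g t)).2) (Icc a b) :=
    continuous_snd.comp_continuousOn ((triv_continuousOn T).comp hg hmem)
  exact isPreconnected_Icc.constant hcont hc hd

/-- Discrete chain of sheet-transports. -/
noncomputable def chainE {E X : Type*} [TopologicalSpace E] [TopologicalSpace X] {F : E → X}
    {x : ℕ → X} (T : ∀ j, Bundle.Trivialization (F ⁻¹' {x j}) F) (y : ℕ → X) (e0 : E) : ℕ → E
  | 0 => e0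
  | j+1 => tpt (T j) (y (j+1)) (chainE T y e0 j)

end Helpers

/-- Homotopy lifting endpoint invariance for covering maps. -/
theorem key_lift {E X : Type*} [TopologicalSpace E] [TopologicalSpace X] {F : E → X}
    (hF : IsCoveringMap F) (H : ℝ × ℝ → X) (hH : Continuous H)
    (Γ₀ Γ₁ : ℝ → E) (hΓ₀ : Continuous Γ₀) (hΓ₁ : Continuous Γ₁)
    (h₀ : ∀ t, F (Γ₀ t) = H (0, t))
    (h₁ : ∀ t, F (Γ₁ t) = H (1, t))
    (hstart : Γ₀ 0 = Γ₁ 0)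
    (hleft : ∀ s, H (s, 0) = H (0, 0))
    (hright : ∀ s, H (s, 1) = H (0, 1)) :
    Γ₀ 1 = Γ₁ 1 := by
  classical
  -- Lebesgue number for the cover of the unit square by evenly covered preimages
  set Q : Set (ℝ × ℝ) := Icc (0:ℝ) 1 ×ˢ Icc (0:ℝ) 1 with hQdef
  have hQ : IsCompact Q := isCompact_Icc.prod isCompact_Icc
  have hrange : ∀ z, H z ∈ range F := by
    have hcl : IsClopen (range F) := by
      refine ⟨isOpen_compl_iff.mp (isOpen_iff_forall_mem_open.mpr fun x hx => ?_),
        hF.isOpenMap.isOpen_range⟩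
      obtain ⟨_, U, hxU, hU, _, Hh, _⟩ := hF x
      refine ⟨U, ?_, hU, hxU⟩
      rintro y hyU ⟨e, rfl⟩
      obtain ⟨e', he'⟩ := (Hh ⟨e, hyU⟩).2
      exact hx ⟨e', he'⟩
    have huniv := (hcl.preimage hH).eq_univ ⟨(0, 0), ⟨Γ₀ 0, h₀ 0⟩⟩
    intro z
    have hz : z ∈ H ⁻¹' range F := huniv ▸ mem_univ z
    exact hz
  haveI : ∀ z, Nonempty (F ⁻¹' {H z}) := fun z =>
    let ⟨e, he⟩ := hrange z
    ⟨⟨e, he⟩⟩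
  have hopen : ∀ z : ℝ × ℝ, IsOpen (H ⁻¹' (hF (H z)).toTrivialization.baseSet) :=
    fun z => (hF (H z)).toTrivialization.open_baseSet.preimage hH
  have hcover : Q ⊆ ⋃ z : ℝ × ℝ, H ⁻¹' (hF (H z)).toTrivialization.baseSet := by
    intro z _
    exact mem_iUnion.2 ⟨z, (hF (H z)).mem_toTrivialization_baseSet⟩
  obtain ⟨δ, hδ, hball⟩ := lebesgue_number_lemma_of_metric hQ hopen hcover
  obtain ⟨n, hn⟩ := exists_nat_one_div_lt hδ
  set N : ℕ := n + 1 with hNdef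
  have hN : 0 < N := Nat.succ_pos n
  have hNR : (0:ℝ) < N := by positivity
  have hNδ : 1 / (N : ℝ) < δ := by
    rw [hNdef]; push_cast; exact hn
  -- grid
  set u : ℕ → ℝ := fun j => (j : ℝ) / N with hudef
  have hu0 : u 0 = 0 := by simp [hudef]
  have huN : u N = 1 := by
    rw [hudef]; exact div_self (ne_of_gt hNR)
  have hustep : ∀ j : ℕ, u (j + 1) = u j + 1 / N := by
    intro j; rw [hudef]; push_cast; ring
  have humono : ∀ j : ℕ, u j ≤ u (j + 1) := by
    intro j; rw [hustep]; linarith [one_div_pos.mpr hNR]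
  have hu_nonneg : ∀ j : ℕ, 0 ≤ u j := by
    intro j; rw [hudef]; positivity
  have hu_le_one : ∀ j : ℕ, j ≤ N → u j ≤ 1 := by
    intro j hj
    rw [hudef, div_le_one hNR]
    exact_mod_cast hj
  -- choose evenly covered trivializations for each grid square
  have hsq : ∀ k j : ℕ, ∃ (x : X) (T : Bundle.Trivialization (F ⁻¹' {x}) F),
      DiscreteTopology (F ⁻¹' {x} : Set E) ∧
      (k < N → j < N → ∀ s t : ℝ, u k ≤ s → s ≤ u (k+1) → u j ≤ t → t ≤ u (j+1) →
        H (s, t) ∈ T.baseSet) := by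
    intro k j
    by_cases hk : k < N ∧ j < N
    · obtain ⟨hk, hj⟩ := hk
      have hcorner : ((u k, u j) : ℝ × ℝ) ∈ Q := by
        constructor
        · exact ⟨hu_nonneg k, hu_le_one k hk.le⟩
        · exact ⟨hu_nonneg j, hu_le_one j hj.le⟩
      obtain ⟨z, hz⟩ := hball (u k, u j) hcorner
      refine ⟨H z, (hF (H z)).toTrivialization, (hF (H z)).1, ?_⟩
      intro _ _ s t hs1 hs2 ht1 ht2
      have hmem : ((s, t) : ℝ × ℝ) ∈ ball ((u k, u j) : ℝ × ℝ) δ := by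
        rw [mem_ball, Prod.dist_eq]
        have h1 : dist s (u k) < δ := by
          rw [Real.dist_eq, abs_of_nonneg (by linarith)]
          have := hustep k; linarith
        have h2 : dist t (u j) < δ := by
          rw [Real.dist_eq, abs_of_nonneg (by linarith)]
          have := hustep j; linarith
        exact max_lt h1 h2
      exact hz hmem
    · exact ⟨H (0,0), (hF (H (0,0))).toTrivialization, (hF (H (0,0))).1,
        fun h1 h2 => absurd ⟨h1, h2⟩ hk⟩
  choose xx TT dsc hTT using hsq
  -- the discrete chain of lifted grid points, one per strip k
  let ee : ℕ → ℕ → ℝ → E := fun k j s =>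
    chainE (fun j' => TT k j') (fun j' => H (s, u j')) (Γ₀ 0) j
  have hee0 : ∀ k s, ee k 0 s = Γ₀ 0 := fun _ _ => rfl
  have heeS : ∀ k j s, ee k (j+1) s = tpt (TT k j) (H (s, u (j+1))) (ee k j s) :=
    fun _ _ _ => rfl
  -- (a) the chain lies over the grid points of the homotopy
  have haF : ∀ k j : ℕ, k < N → j ≤ N → ∀ s : ℝ, u k ≤ s → s ≤ u (k+1) →
      F (ee k j s) = H (s, u j) := by
    intro k j hk hj s hs1 hs2
    cases j with
    | zero =>
      rw [hee0, hu0, h₀ 0, hleft s]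
    | succ j =>
      rw [heeS]
      exact F_tpt _ (hTT k j hk (by omega) s (u (j+1)) hs1 hs2 (humono j) le_rfl) _
  -- (b) source membership
  have hsrc : ∀ k j : ℕ, k < N → j < N → ∀ s : ℝ, u k ≤ s → s ≤ u (k+1) →
      ee k j s ∈ (TT k j).source := by
    intro k j hk hj s hs1 hs2
    rw [Bundle.Trivialization.mem_source, haF k j hk hj.le s hs1 hs2]
    exact hTT k j hk hj s (u j) hs1 hs2 le_rfl (humono j)
  -- (d) continuity of the chain in the strip parameter, with constant sheets
  have hcont : ∀ k j : ℕ, k < N → j ≤ N →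
      ContinuousOn (fun s => ee k j s) (Icc (u k) (u (k+1))) := by
    intro k j hk hj
    induction j with
    | zero => exact continuousOn_const
    | succ j ih =>
      haveI := dsc k j
      have hj' : j < N := by omega
      have ihc := ih (by omega)
      have hs_src : ∀ s ∈ Icc (u k) (u (k+1)), ee k j s ∈ (TT k j).source :=
        fun s hs => hsrc k j hk hj' s hs.1 hs.2
      -- sheet is constant on the strip
      have hsheet : ∀ s ∈ Icc (u k) (u (k+1)),
          ((TT k j) (ee k j s)).2 = ((TT k j) (ee k j (u k))).2 := by
        intro s hs
        have hcs : ContinuousOn (fun s => ((TT k j) (ee k j s)).2) (Icc (u k) (u (k+1))) :=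
          continuous_snd.comp_continuousOn ((triv_continuousOn (TT k j)).comp ihc hs_src)
        exact isPreconnected_Icc.constant hcs hs ⟨le_rfl, humono k⟩
      have hbase : ∀ s ∈ Icc (u k) (u (k+1)), H (s, u (j+1)) ∈ (TT k j).baseSet :=
        fun s hs => hTT k j hk hj' s (u (j+1)) hs.1 hs.2 (humono j) le_rfl
      have hcH : ContinuousOn (fun s : ℝ => H (s, u (j+1))) (Icc (u k) (u (k+1))) :=
        (hH.comp (continuous_id.prodMk continuous_const)).continuousOn
      refine ContinuousOn.congr
        (continuousOn_tpt_fixed (TT k j) (((TT k j) (ee k j (u k))).2) hcH hbase) ?_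
      intro s hs
      show ee k (j+1) s =
        (TT k j).toOpenPartialHomeomorph.symm (H (s, u (j+1)), ((TT k j) (ee k j (u k))).2)
      rw [heeS, tpt, hsheet s hs]
  -- (iv) the endpoint of the chain is constant along each strip
  have hiv : ∀ k : ℕ, k < N → ∀ s : ℝ, u k ≤ s → s ≤ u (k+1) → ee k N s = ee k N (u k) := by
    intro k hk s hs1 hs2
    haveI := dsc k n
    have hnN : n < N := by omega
    have ihc := hcont k n hk (by omega)
    have hs_src : ∀ s' ∈ Icc (u k) (u (k+1)), ee k n s' ∈ (TT k n).source :=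
      fun s' hs' => hsrc k n hk hnN s' hs'.1 hs'.2
    have hsheet : ((TT k n) (ee k n s)).2 = ((TT k n) (ee k n (u k))).2 := by
      have hcs : ContinuousOn (fun s' => ((TT k n) (ee k n s')).2) (Icc (u k) (u (k+1))) :=
        continuous_snd.comp_continuousOn ((triv_continuousOn (TT k n)).comp ihc hs_src)
      exact isPreconnected_Icc.constant hcs ⟨hs1, hs2⟩ ⟨le_rfl, humono k⟩
    have hun1 : u (n + 1) = 1 := by rw [← hNdef]; exact huN
    have h1 : H (s, u (n+1)) = H (u k, u (n+1)) := by
      rw [hun1, hright s, hright (u k)]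
    show ee k (n+1) s = ee k (n+1) (u k)
    rw [heeS, heeS]
    simp only [tpt]
    rw [hsheet, h1]
  -- (ii) the chain over the left edge agrees with the given lift Γ₀
  have hii : ∀ j : ℕ, j ≤ N → ee 0 j 0 = Γ₀ (u j) := by
    intro j hj
    induction j with
    | zero => rw [hee0, hu0]
    | succ j ih =>
      haveI := dsc 0 j
      have hj' : j < N := by omega
      have hstrip1 : u 0 ≤ (0:ℝ) := hu0.le
      have hstrip2 : (0:ℝ) ≤ u (0+1) := hu0 ▸ humono 0
      have hΓsrc : ∀ t ∈ Icc (u j) (u (j+1)), Γ₀ t ∈ (TT 0 j).source := by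
        intro t ht
        rw [Bundle.Trivialization.mem_source, h₀ t]
        exact hTT 0 j hN hj' 0 t hstrip1 hstrip2 ht.1 ht.2
      have hsheet : ((TT 0 j) (Γ₀ (u (j+1)))).2 = ((TT 0 j) (Γ₀ (u j))).2 :=
        sheet_const (TT 0 j) hΓ₀.continuousOn hΓsrc ⟨humono j, le_rfl⟩ ⟨le_rfl, humono j⟩
      rw [heeS, ih (by omega)]
      have h := eq_tpt (TT 0 j) (hΓsrc (u (j+1)) ⟨humono j, le_rfl⟩) hsheet
      rw [h₀ (u (j+1))] at h
      exact h.symm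
  -- (iii) the chain over the right edge agrees with the given lift Γ₁
  have hiii : ∀ j : ℕ, j ≤ N → ee n j 1 = Γ₁ (u j) := by
    intro j hj
    induction j with
    | zero => rw [hee0, hu0, hstart]
    | succ j ih =>
      haveI := dsc n j
      have hj' : j < N := by omega
      have hnN : n < N := by omega
      have hun1 : u (n + 1) = 1 := by rw [← hNdef]; exact huN
      have hstrip1 : u n ≤ (1:ℝ) := hun1 ▸ humono n
      have hstrip2 : (1:ℝ) ≤ u (n+1) := hun1.ge
      have hΓsrc : ∀ t ∈ Icc (u j) (u (j+1)), Γ₁ t ∈ (TT n j).source := by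
        intro t ht
        rw [Bundle.Trivialization.mem_source, h₁ t]
        exact hTT n j hnN hj' 1 t hstrip1 hstrip2 ht.1 ht.2
      have hsheet : ((TT n j) (Γ₁ (u (j+1)))).2 = ((TT n j) (Γ₁ (u j))).2 :=
        sheet_const (TT n j) hΓ₁.continuousOn hΓsrc ⟨humono j, le_rfl⟩ ⟨le_rfl, humono j⟩
      rw [heeS, ih (by omega)]
      have h := eq_tpt (TT n j) (hΓsrc (u (j+1)) ⟨humono j, le_rfl⟩) hsheet
      rw [h₁ (u (j+1))] at h
      exact h.symm
  -- (i) consistency of the chains of adjacent strips at the common boundary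
  have hi : ∀ k : ℕ, k + 1 < N → ∀ j : ℕ, j ≤ N →
      ee k j (u (k+1)) = ee (k+1) j (u (k+1)) := by
    intro k hk1 j hj
    have hk : k < N := by omega
    induction j with
    | zero => rfl
    | succ j ih =>
      haveI := dsc (k+1) j
      have hj' : j < N := by omega
      have ihe : ee (k+1) j (u (k+1)) = ee k j (u (k+1)) := (ih (by omega)).symm
      have hsk1 : u k ≤ u (k+1) := humono k
      have hsk2 : u (k+1) ≤ u (k+1+1) := humono (k+1)
      let g : ℝ → E := fun t =>
        (TT k j).toOpenPartialHomeomorph.symm (H (u (k+1), t), ((TT k j) (ee k j (u (k+1)))).2)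
      have hgbase : ∀ t ∈ Icc (u j) (u (j+1)), H (u (k+1), t) ∈ (TT k j).baseSet :=
        fun t ht => hTT k j hk hj' (u (k+1)) t hsk1 le_rfl ht.1 ht.2
      have hgbase' : ∀ t ∈ Icc (u j) (u (j+1)), H (u (k+1), t) ∈ (TT (k+1) j).baseSet :=
        fun t ht => hTT (k+1) j hk1 hj' (u (k+1)) t le_rfl hsk2 ht.1 ht.2
      have hgcont : ContinuousOn g (Icc (u j) (u (j+1))) :=
        continuousOn_tpt_fixed (TT k j) _
          ((hH.comp (continuous_const.prodMk continuous_id)).continuousOn) hgbase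
      have hgF : ∀ t ∈ Icc (u j) (u (j+1)), F (g t) = H (u (k+1), t) := fun t ht =>
        (TT k j).proj_symm_apply ((TT k j).mem_target.2 (hgbase t ht))
      have hgsrc' : ∀ t ∈ Icc (u j) (u (j+1)), g t ∈ (TT (k+1) j).source := by
        intro t ht
        rw [Bundle.Trivialization.mem_source, hgF t ht]
        exact hgbase' t ht
      have hsheet : ((TT (k+1) j) (g (u (j+1)))).2 = ((TT (k+1) j) (g (u j))).2 :=
        sheet_const (TT (k+1) j) hgcont hgsrc' ⟨humono j, le_rfl⟩ ⟨le_rfl, humono j⟩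
      have hgj : g (u j) = ee k j (u (k+1)) := by
        show tpt (TT k j) (H (u (k+1), u j)) (ee k j (u (k+1))) = ee k j (u (k+1))
        rw [← haF k j hk (by omega) (u (k+1)) hsk1 le_rfl]
        exact tpt_self _ (hsrc k j hk hj' (u (k+1)) hsk1 le_rfl)
      have hgj1 : g (u (j+1)) = ee k (j+1) (u (k+1)) := by
        rw [heeS]; rfl
      have hA : F (ee k (j+1) (u (k+1))) = H (u (k+1), u (j+1)) :=
        haF k (j+1) hk (by omega) (u (k+1)) hsk1 le_rfl
      have hsrc' : ee k (j+1) (u (k+1)) ∈ (TT (k+1) j).source := by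
        rw [Bundle.Trivialization.mem_source, hA]
        exact hgbase' (u (j+1)) ⟨humono j, le_rfl⟩
      have hsheet2 : ((TT (k+1) j) (ee k (j+1) (u (k+1)))).2
          = ((TT (k+1) j) (ee (k+1) j (u (k+1)))).2 := by
        rw [← hgj1, hsheet, hgj, ihe]
      have h := eq_tpt (TT (k+1) j) hsrc' hsheet2
      rw [hA] at h
      rw [heeS (k+1)]
      exact h
  -- assemble: the common endpoint propagates across all strips
  have hA0 : ∀ k : ℕ, k < N → ee k N (u k) = Γ₀ 1 := by
    intro k hk
    induction k with
    | zero => rw [hu0, hii N le_rfl, huN]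
    | succ k ih =>
      have hk' : k < N := by omega
      calc ee (k+1) N (u (k+1)) = ee k N (u (k+1)) := (hi k hk N le_rfl).symm
        _ = ee k N (u k) := hiv k hk' (u (k+1)) (humono k) le_rfl
        _ = Γ₀ 1 := ih hk'
  have hun1 : u (n + 1) = 1 := by rw [← hNdef]; exact huN
  have h1 : ee n N 1 = Γ₁ 1 := by rw [hiii N le_rfl, huN]
  have h2 : ee n N 1 = ee n N (u n) :=
    hiv n (by omega) 1 (hun1 ▸ humono n) hun1.ge
  rw [← h1, h2, hA0 n (by omega)]

/-- The homotopy-lifting injectivity argument of Lemma 2.7: a covering map from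
a closed ball cannot identify two radial segments whose straight-line homotopy
stays in the image; the hypotheses lead to a contradiction. -/
theorem stmt_10
    {n : ℕ} (rtilde r₅ : ℝ) (hr₅ : 0 < r₅) (hr : r₅ < rtilde)
    (f : EuclideanSpace ℝ (Fin n) → EuclideanSpace ℝ (Fin n))
    (p : EuclideanSpace ℝ (Fin n)) (hfp : f 0 = p)
    (hcov : IsCoveringMap
      (fun x : closedBall (0 : EuclideanSpace ℝ (Fin n)) rtilde =>
        (⟨f x, mem_image_of_mem f x.2⟩ : f '' closedBall (0 : EuclideanSpace ℝ (Fin n)) rtilde)))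
    (v₀ v₁ : EuclideanSpace ℝ (Fin n))
    (hv₀ : v₀ ∈ ball (0 : EuclideanSpace ℝ (Fin n)) r₅)
    (hv₁ : v₁ ∈ ball (0 : EuclideanSpace ℝ (Fin n)) r₅)
    (hne : v₀ ≠ v₁)
    (q : EuclideanSpace ℝ (Fin n)) (hq₀ : f v₀ = q) (hq₁ : f v₁ = q)
    (D : Set (EuclideanSpace ℝ (Fin n)))
    (hD : D ⊆ f '' closedBall (0 : EuclideanSpace ℝ (Fin n)) rtilde)
    (hγ₀ : ∀ t ∈ Icc (0:ℝ) 1, f (t • v₀) ∈ D)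
    (hγ₁ : ∀ t ∈ Icc (0:ℝ) 1, f (t • v₁) ∈ D)
    (hhomotopy : ∀ s ∈ Icc (0:ℝ) 1, ∀ t ∈ Icc (0:ℝ) 1,
      s • f (t • v₁) + (1 - s) • f (t • v₀) ∈ D) :
    False := by
  classical
  -- the clamping function
  set σ : ℝ → ℝ := fun a => max 0 (min a 1) with hσ
  have hσ_cont : Continuous σ := continuous_const.max (continuous_id.min continuous_const)
  have hσ_mem : ∀ a, σ a ∈ Icc (0:ℝ) 1 :=
    fun a => ⟨le_max_left _ _, max_le zero_le_one (min_le_right _ _)⟩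
  have hσ0 : σ 0 = 0 := by simp [hσ]
  have hσ1 : σ 1 = 1 := by simp [hσ]
  have hmemv : ∀ (a : ℝ) (v : EuclideanSpace ℝ (Fin n)), v ∈ ball (0 : EuclideanSpace ℝ (Fin n)) r₅ →
      σ a • v ∈ closedBall (0 : EuclideanSpace ℝ (Fin n)) rtilde := by
    intro a v hv
    rw [mem_closedBall_zero_iff, norm_smul]
    have h1 : ‖σ a‖ ≤ 1 := by
      rw [Real.norm_eq_abs, abs_of_nonneg (hσ_mem a).1]; exact (hσ_mem a).2
    have h2 : ‖v‖ ≤ rtilde := by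
      rw [mem_ball_zero_iff] at hv; linarith
    calc ‖σ a‖ * ‖v‖ ≤ 1 * ‖v‖ := mul_le_mul_of_nonneg_right h1 (norm_nonneg v)
      _ = ‖v‖ := one_mul _
      _ ≤ rtilde := h2
  -- continuity of f on the closed ball
  have hfc : ContinuousOn f (closedBall (0 : EuclideanSpace ℝ (Fin n)) rtilde) := by
    rw [continuousOn_iff_continuous_restrict]
    exact continuous_subtype_val.comp hcov.continuous
  -- the lifted radial paths
  let Γ₀ : ℝ → (closedBall (0 : EuclideanSpace ℝ (Fin n)) rtilde : Set _) :=
    fun t => ⟨σ t • v₀, hmemv t v₀ hv₀⟩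
  let Γ₁ : ℝ → (closedBall (0 : EuclideanSpace ℝ (Fin n)) rtilde : Set _) :=
    fun t => ⟨σ t • v₁, hmemv t v₁ hv₁⟩
  have hΓ₀c : Continuous Γ₀ := Continuous.subtype_mk (hσ_cont.smul continuous_const) _
  have hΓ₁c : Continuous Γ₁ := Continuous.subtype_mk (hσ_cont.smul continuous_const) _
  -- the homotopy in the image
  have hHmem : ∀ z : ℝ × ℝ,
      σ z.1 • f (σ z.2 • v₁) + (1 - σ z.1) • f (σ z.2 • v₀)
        ∈ f '' closedBall (0 : EuclideanSpace ℝ (Fin n)) rtilde :=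
    fun z => hD (hhomotopy (σ z.1) (hσ_mem z.1) (σ z.2) (hσ_mem z.2))
  let H : ℝ × ℝ → (f '' closedBall (0 : EuclideanSpace ℝ (Fin n)) rtilde : Set _) :=
    fun z => ⟨σ z.1 • f (σ z.2 • v₁) + (1 - σ z.1) • f (σ z.2 • v₀), hHmem z⟩
  have hfσc : ∀ v : EuclideanSpace ℝ (Fin n), v ∈ ball (0 : EuclideanSpace ℝ (Fin n)) r₅ →
      Continuous (fun z : ℝ × ℝ => f (σ z.2 • v)) := by
    intro v hv
    apply hfc.comp_continuous ((hσ_cont.comp continuous_snd).smul continuous_const)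
    intro z
    exact hmemv z.2 v hv
  have hHc : Continuous H := by
    apply Continuous.subtype_mk
    exact ((hσ_cont.comp continuous_fst).smul (hfσc v₁ hv₁)).add
      ((continuous_const.sub (hσ_cont.comp continuous_fst)).smul (hfσc v₀ hv₀))
  -- hypotheses of the key lemma
  have h₀ : ∀ t, (fun x : closedBall (0 : EuclideanSpace ℝ (Fin n)) rtilde =>
      (⟨f x, mem_image_of_mem f x.2⟩ :
        f '' closedBall (0 : EuclideanSpace ℝ (Fin n)) rtilde)) (Γ₀ t) = H (0, t) := by
    intro t
    apply Subtype.ext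
    show f (σ t • v₀) = σ 0 • f (σ t • v₁) + (1 - σ 0) • f (σ t • v₀)
    rw [hσ0, zero_smul, zero_add, sub_zero, one_smul]
  have h₁ : ∀ t, (fun x : closedBall (0 : EuclideanSpace ℝ (Fin n)) rtilde =>
      (⟨f x, mem_image_of_mem f x.2⟩ :
        f '' closedBall (0 : EuclideanSpace ℝ (Fin n)) rtilde)) (Γ₁ t) = H (1, t) := by
    intro t
    apply Subtype.ext
    show f (σ t • v₁) = σ 1 • f (σ t • v₁) + (1 - σ 1) • f (σ t • v₀)
    rw [hσ1, one_smul, sub_self, zero_smul, add_zero]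
  have hstart : Γ₀ 0 = Γ₁ 0 := by
    apply Subtype.ext
    show σ 0 • v₀ = σ 0 • v₁
    rw [hσ0, zero_smul, zero_smul]
  have hleft : ∀ s, H (s, 0) = H (0, 0) := by
    intro s
    apply Subtype.ext
    show σ s • f (σ 0 • v₁) + (1 - σ s) • f (σ 0 • v₀)
        = σ 0 • f (σ 0 • v₁) + (1 - σ 0) • f (σ 0 • v₀)
    rw [hσ0, zero_smul, zero_smul, hfp]
    have e1 : σ s + (1 - σ s) = 1 := by ring
    rw [← add_smul, ← add_smul, e1]
    norm_num
  have hright : ∀ s, H (s, 1) = H (0, 1) := by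
    intro s
    apply Subtype.ext
    show σ s • f (σ 1 • v₁) + (1 - σ s) • f (σ 1 • v₀)
        = σ 0 • f (σ 1 • v₁) + (1 - σ 0) • f (σ 1 • v₀)
    rw [hσ1, hσ0, one_smul, one_smul, hq₀, hq₁]
    have e1 : σ s + (1 - σ s) = 1 := by ring
    rw [← add_smul, ← add_smul, e1]
    norm_num
  have hend := key_lift hcov H hHc Γ₀ Γ₁ hΓ₀c hΓ₁c h₀ h₁ hstart hleft hright
  have hval : σ 1 • v₀ = σ 1 • v₁ := congrArg Subtype.val hend
  rw [hσ1, one_smul, one_smul] at hval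
  exact hne hval
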